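/- Let N ≥ 1 and M ≥ 1 be natural numbers and let α_1, …, α_M be pairwise distinct multi-indices in ℕ^N. Then for Lebesgue-almost every family of real numbers x = (x_{l,j})_{1≤l≤M, 1≤j≤N} ∈ ℝ^{M×N}, the M × M matrix whose (l, r) entry is the monomial ∏_{j=1}^N x_{l,j}^{α_r(j)} is invertible. -/

import Mathlib

open MeasureTheory Matrix

/-- A nonzero multivariate polynomial over `ℝ` is a.e. nonvanishing. -/
lemma aux_ae_eval_ne_zero :
    ∀ (n : ℕ) (p : MvPolynomial (Fin n) ℝ), p ≠ 0 →
      ∀ᵐ x : Fin n → ℝ ∂volume, MvPolynomial.eval x p ≠ 0 := by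
  intro n
  induction n with
  | zero =>
    intro p hp
    obtain ⟨r, rfl⟩ := MvPolynomial.C_surjective (Fin 0) p
    have hr : r ≠ 0 := fun h => hp (by simp [h])
    filter_upwards with x
    simpa using hr
  | succ n ih =>
    intro p hp
    set q := MvPolynomial.finSuccEquiv ℝ n p with hq
    have hq0 : q ≠ 0 := by
      intro h
      exact hp ((map_eq_zero_iff _ (MvPolynomial.finSuccEquiv ℝ n).injective).mp h)
    obtain ⟨i, hi⟩ : ∃ i, q.coeff i ≠ 0 := by
      by_contra h
      push_neg at h
      exact hq0 (Polynomial.ext fun i => by simp [h i])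
    have key : ∀ᵐ s : Fin n → ℝ ∂volume, ∀ᵐ y : ℝ ∂volume,
        MvPolynomial.eval (Fin.cons y s) p ≠ 0 := by
      filter_upwards [ih _ hi] with s hs
      have hmap : q.map (MvPolynomial.eval s) ≠ 0 := by
        intro h
        apply hs
        have := congrArg (fun r => Polynomial.coeff r i) h
        simpa [Polynomial.coeff_map] using this
      have hfin : volume {y : ℝ | Polynomial.IsRoot (q.map (MvPolynomial.eval s)) y} = 0 :=
        (Polynomial.finite_setOf_isRoot hmap).measure_zero volume
      rw [ae_iff]
      refine measure_mono_null ?_ hfin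
      intro y hy
      simp only [Set.mem_setOf_eq, not_not] at hy ⊢
      rw [MvPolynomial.eval_eq_eval_mv_eval'] at hy
      exact hy
    -- continuity / measurability of the evaluation map
    have hcons : Continuous fun w : (Fin n → ℝ) × ℝ => (Fin.cons w.2 w.1 : Fin (n + 1) → ℝ) := by
      refine continuous_pi fun i => ?_
      refine Fin.cases ?_ ?_ i
      · simpa using continuous_snd
      · intro j
        simpa [Function.comp_def] using (continuous_apply j).comp continuous_fst
    have hcont : Continuous fun w : (Fin n → ℝ) × ℝ =>
        MvPolynomial.eval (Fin.cons w.2 w.1 : Fin (n + 1) → ℝ) p :=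
      show Continuous ((fun v : Fin (n + 1) → ℝ => MvPolynomial.eval v p) ∘
          fun w : (Fin n → ℝ) × ℝ => (Fin.cons w.2 w.1 : Fin (n + 1) → ℝ)) from
        (MvPolynomial.continuous_eval p).comp hcons
    have hmeas : MeasurableSet
        {w : (Fin n → ℝ) × ℝ | MvPolynomial.eval (Fin.cons w.2 w.1 : Fin (n + 1) → ℝ) p ≠ 0} :=
      (hcont.measurable (measurableSet_singleton (0 : ℝ))).compl
    have h1 : ∀ᵐ w : (Fin n → ℝ) × ℝ ∂(volume.prod volume),
        MvPolynomial.eval (Fin.cons w.2 w.1 : Fin (n + 1) → ℝ) p ≠ 0 :=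
      (Measure.ae_prod_iff_ae_ae hmeas).mpr key
    have hswap : MeasurePreserving (Prod.swap : ℝ × (Fin n → ℝ) → (Fin n → ℝ) × ℝ)
        (volume.prod volume) (volume.prod volume) := Measure.measurePreserving_swap
    have h2 : ∀ᵐ z : ℝ × (Fin n → ℝ) ∂(volume.prod volume),
        MvPolynomial.eval (Fin.cons z.1 z.2 : Fin (n + 1) → ℝ) p ≠ 0 :=
      hswap.quasiMeasurePreserving.ae h1
    have hmp := measurePreserving_piFinSuccAbove (fun _ : Fin (n + 1) => (volume : Measure ℝ)) 0
    have h3 := hmp.quasiMeasurePreserving.ae h2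
    filter_upwards [h3] with x hx
    have hcx : (Fin.cons (x 0) (Fin.tail x) : Fin (n + 1) → ℝ) = x := Fin.cons_self_tail x
    simpa [MeasurableEquiv.piFinSuccAbove, Fin.insertNthEquiv, Fin.removeNth_zero, hcx] using hx

/-- Uncurrying is measure preserving for Lebesgue measure on matrix space. -/
lemma aux_map_uncurry_volume (M N : ℕ) :
    Measure.map (fun (x : Fin M → Fin N → ℝ) (p : Fin M × Fin N) => x p.1 p.2) volume
      = volume := by
  have hm : Measurable fun (x : Fin M → Fin N → ℝ) (p : Fin M × Fin N) => x p.1 p.2 :=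
    measurable_pi_lambda _ fun p => (measurable_pi_apply p.2).comp (measurable_pi_apply p.1)
  have : Measure.map (fun (x : Fin M → Fin N → ℝ) (p : Fin M × Fin N) => x p.1 p.2) volume
      = Measure.pi fun _ : Fin M × Fin N => volume := by
    refine (Measure.pi_eq fun s hs => ?_).symm
    rw [Measure.map_apply hm (MeasurableSet.univ_pi hs)]
    have hpre : (fun (x : Fin M → Fin N → ℝ) (p : Fin M × Fin N) => x p.1 p.2) ⁻¹'
        Set.pi Set.univ s
        = Set.pi Set.univ fun l => Set.pi Set.univ fun j => s (l, j) := by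
      ext x
      simp [Set.mem_pi, Prod.forall]
    rw [hpre]
    have h1 : (volume : Measure (Fin M → Fin N → ℝ))
        (Set.pi Set.univ fun l => Set.pi Set.univ fun j => s (l, j))
        = ∏ l, (volume : Measure (Fin N → ℝ)) (Set.pi Set.univ fun j => s (l, j)) :=
      volume_pi_pi (fun l => Set.pi Set.univ fun j => s (l, j))
    rw [h1, Fintype.prod_prod_type]
    exact Finset.prod_congr rfl fun l _ => volume_pi_pi _
  exact this

/-- A nonzero multivariate polynomial over a product index is a.e. nonvanishing on
matrix space. -/
lemma aux_ae_eval_ne_zero_prod (M N : ℕ) (P : MvPolynomial (Fin M × Fin N) ℝ) (hP : P ≠ 0) :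
    ∀ᵐ x : Fin M → Fin N → ℝ ∂volume,
      MvPolynomial.eval (fun p : Fin M × Fin N => x p.1 p.2) P ≠ 0 := by
  classical
  let e : Fin M × Fin N ≃ Fin (M * N) := finProdFinEquiv
  have hQ : MvPolynomial.rename e P ≠ 0 := by
    intro h
    exact hP (MvPolynomial.rename_injective e e.injective (by simpa using h))
  have h1 := aux_ae_eval_ne_zero (M * N) _ hQ
  have hmp := MeasureTheory.volume_measurePreserving_piCongrLeft (fun _ : Fin (M * N) => ℝ) e
  have h2 := hmp.quasiMeasurePreserving.ae h1
  -- h2 : ∀ᵐ y : Fin M × Fin N → ℝ, eval (piCongrLeft y) (rename e P) ≠ 0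
  have h3 : ∀ᵐ y : Fin M × Fin N → ℝ ∂volume, MvPolynomial.eval y P ≠ 0 := by
    filter_upwards [h2] with y hy
    intro h0
    apply hy
    rw [MvPolynomial.eval_rename,
      show ((MeasurableEquiv.piCongrLeft (fun _ : Fin (M * N) => ℝ) e) y ∘ ⇑e) = y from
        funext fun pq => MeasurableEquiv.piCongrLeft_apply_apply (β := fun _ => ℝ) e y pq]
    exact h0
  have hm : Measurable fun (x : Fin M → Fin N → ℝ) (p : Fin M × Fin N) => x p.1 p.2 :=
    measurable_pi_lambda _ fun p => (measurable_pi_apply p.2).comp (measurable_pi_apply p.1)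
  have hmp2 : MeasurePreserving (fun (x : Fin M → Fin N → ℝ) (p : Fin M × Fin N) => x p.1 p.2)
      volume volume := ⟨hm, aux_map_uncurry_volume M N⟩
  exact hmp2.quasiMeasurePreserving.ae h3

/-- The generalized Vandermonde determinant polynomial is nonzero. -/
lemma aux_det_poly_ne_zero (N M : ℕ) (α : Fin M → Fin N → ℕ) (hα : Function.Injective α) :
    (Matrix.of (fun l r : Fin M =>
      ∏ j : Fin N, (MvPolynomial.X (l, j) : MvPolynomial (Fin M × Fin N) ℝ) ^ α r j)).det
      ≠ 0 := by
  classical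
  set m : Equiv.Perm (Fin M) → ((Fin M × Fin N) →₀ ℕ) :=
    fun σ => Finsupp.equivFunOnFinite.symm fun p => α (σ⁻¹ p.1) p.2 with hm
  have hmapp : ∀ σ p, m σ p = α (σ⁻¹ p.1) p.2 := fun σ p => rfl
  have hminj : Function.Injective m := by
    intro σ τ h
    have h' : ∀ l : Fin M, α (σ⁻¹ l) = α (τ⁻¹ l) := by
      intro l
      funext j
      have := congrArg (fun f : (Fin M × Fin N) →₀ ℕ => f (l, j)) h
      simpa [hmapp] using this
    have hinv : σ⁻¹ = τ⁻¹ := Equiv.ext fun l => hα (h' l)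
    simpa using congrArg Inv.inv hinv
  have hprod : ∀ σ : Equiv.Perm (Fin M),
      (∏ r : Fin M, ∏ j : Fin N,
        (MvPolynomial.X ((σ r), j) : MvPolynomial (Fin M × Fin N) ℝ) ^ α r j)
      = MvPolynomial.monomial (m σ) (1 : ℝ) := by
    intro σ
    have step1 : (∏ r : Fin M, ∏ j : Fin N,
        (MvPolynomial.X ((σ r), j) : MvPolynomial (Fin M × Fin N) ℝ) ^ α r j)
        = ∏ l : Fin M, ∏ j : Fin N,
            (MvPolynomial.X (l, j) : MvPolynomial (Fin M × Fin N) ℝ) ^ α (σ⁻¹ l) j := by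
      rw [← Equiv.prod_comp σ (fun l => ∏ j : Fin N,
        (MvPolynomial.X (l, j) : MvPolynomial (Fin M × Fin N) ℝ) ^ α (σ⁻¹ l) j)]
      simp
    rw [step1]
    have step2 : (∏ l : Fin M, ∏ j : Fin N,
        (MvPolynomial.X (l, j) : MvPolynomial (Fin M × Fin N) ℝ) ^ α (σ⁻¹ l) j)
        = ∏ p : Fin M × Fin N,
            (MvPolynomial.X p : MvPolynomial (Fin M × Fin N) ℝ) ^ m σ p := by
      rw [Fintype.prod_prod_type]
      exact Finset.prod_congr rfl fun l _ => Finset.prod_congr rfl fun j _ => by rw [hmapp]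
    rw [step2, ← MvPolynomial.prod_X_pow_eq_monomial]
    refine (Finset.prod_subset (Finset.subset_univ _) ?_).symm
    intro p _ hp
    have : m σ p = 0 := Finsupp.notMem_support_iff.mp hp
    simp [this]
  have hdet : (Matrix.of (fun l r : Fin M =>
      ∏ j : Fin N, (MvPolynomial.X (l, j) : MvPolynomial (Fin M × Fin N) ℝ) ^ α r j)).det
      = ∑ σ : Equiv.Perm (Fin M),
          MvPolynomial.monomial (m σ) (((Equiv.Perm.sign σ : ℤ) : ℝ)) := by
    rw [Matrix.det_apply']
    refine Finset.sum_congr rfl fun σ _ => ?_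
    have : (∏ r : Fin M, (Matrix.of (fun l r : Fin M =>
        ∏ j : Fin N, (MvPolynomial.X (l, j) : MvPolynomial (Fin M × Fin N) ℝ) ^ α r j)) (σ r) r)
        = MvPolynomial.monomial (m σ) (1 : ℝ) := by
      rw [← hprod σ]
      rfl
    rw [this]
    have hc : ((Equiv.Perm.sign σ : ℤ) : MvPolynomial (Fin M × Fin N) ℝ)
        = MvPolynomial.C (((Equiv.Perm.sign σ : ℤ) : ℝ)) := by
      exact (map_intCast (MvPolynomial.C : ℝ →+* MvPolynomial (Fin M × Fin N) ℝ)
        ((Equiv.Perm.sign σ : ℤ))).symm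
    rw [hc, MvPolynomial.C_mul_monomial, mul_one]
  intro h0
  have hcoeff : MvPolynomial.coeff (m 1)
      ((Matrix.of (fun l r : Fin M =>
        ∏ j : Fin N, (MvPolynomial.X (l, j) : MvPolynomial (Fin M × Fin N) ℝ) ^ α r j)).det)
      = 1 := by
    rw [hdet, MvPolynomial.coeff_sum]
    rw [Finset.sum_eq_single (1 : Equiv.Perm (Fin M))]
    · simp [MvPolynomial.coeff_monomial]
    · intro σ _ hσ
      rw [MvPolynomial.coeff_monomial, if_neg]
      exact fun h => hσ (hminj h)
    · intro h
      exact absurd (Finset.mem_univ _) h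
  rw [h0] at hcoeff
  simpa using hcoeff

/-- Generalized Vandermonde nonsingularity: for pairwise distinct multi-indices
`α_1, …, α_M ∈ ℕ^N`, for Lebesgue-almost every `x = (x_{l,j}) ∈ ℝ^{M×N}`, the
`M × M` matrix with `(l, r)` entry `∏_j x_{l,j}^{α_r(j)}` is invertible. -/
theorem stmt_1 (N M : ℕ) (hN : 1 ≤ N) (hM : 1 ≤ M)
    (α : Fin M → (Fin N → ℕ)) (hα : Function.Injective α) :
    ∀ᵐ x : Fin M → Fin N → ℝ ∂volume,
      IsUnit (Matrix.of (fun l r : Fin M => ∏ j : Fin N, x l j ^ α r j)).det := by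
  classical
  set P : MvPolynomial (Fin M × Fin N) ℝ :=
    (Matrix.of (fun l r : Fin M =>
      ∏ j : Fin N, (MvPolynomial.X (l, j) : MvPolynomial (Fin M × Fin N) ℝ) ^ α r j)).det with hP
  have hP0 : P ≠ 0 := aux_det_poly_ne_zero N M α hα
  filter_upwards [aux_ae_eval_ne_zero_prod M N P hP0] with x hx
  rw [isUnit_iff_ne_zero]
  intro h0
  apply hx
  have : MvPolynomial.eval (fun p : Fin M × Fin N => x p.1 p.2) P
      = (Matrix.of (fun l r : Fin M => ∏ j : Fin N, x l j ^ α r j)).det := by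
    rw [hP, RingHom.map_det]
    congr 1
    ext l r
    simp [Matrix.map_apply]
  rw [this, h0]
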